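/- arXiv:2305.18664 — 3 statements merged into one kernel-verified Lean document; each statement's English description precedes it below -/
import Mathlib

section
/- Let (Ω, F, P) be a probability space, t ≥ 0, and let B = {B_s} be an ℝ^d-valued continuous process with B₀ = 0 such that B^t_s := B_s − B_t (s ≥ t) is a Brownian motion under P. Let Φ : Ω → Ω₀ be a map into Wiener space satisfying W^t_s(Φ(ω)) = B^t_s(ω) for all s ≥ t, ω ∈ Ω, where W is the canonical process and W^t_s := W_s − W_t. Then for every [t,∞]-valued stopping time τ on Ω with respect to the augmented filtration F^{B^t,P}, there exists a [t,∞]-valued F^{W^t,P₀}-stopping time τ̂ on Ω₀ such that τ = τ̂∘Φ, P-a.s. -/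
open MeasureTheory ProbabilityTheory Filter
open scoped symmDiff

noncomputable section

/-- The canonical path space of continuous `ℝ^d`-valued paths. -/
abbrev PathSp (d : ℕ) : Type := C(ℝ, Fin d → ℝ)

instance (d : ℕ) : MeasurableSpace (PathSp d) := borel _
instance (d : ℕ) : BorelSpace (PathSp d) := ⟨rfl⟩

/-- The increments of `B` after time `t` are those of a Brownian motion under `P`:
independent increments over `[t,∞)` with Gaussian law of covariance `(r−s)·I_d`.
(This says that `B^t_s := B_s − B_t`, `s ≥ t`, is a Brownian motion.) -/
structure IsBMAfter {Ω : Type*} [MeasurableSpace Ω] (P : Measure Ω) {d : ℕ}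
    (B : ℝ → Ω → Fin d → ℝ) (t : ℝ) : Prop where
  indep : ∀ (n : ℕ) (u : Fin (n + 1) → ℝ), Monotone u → (∀ i, t ≤ u i) →
    iIndepFun
      (fun (i : Fin n) ω => B (u i.succ) ω - B (u i.castSucc) ω) P
  gauss : ∀ s r : ℝ, t ≤ s → s ≤ r →
    P.map (fun ω => B r ω - B s ω) =
      Measure.pi fun _ : Fin d => gaussianReal 0 (r - s).toNNReal

/-- The raw filtration `F^{B^t}_s` generated by the increments of `B` after `t`, up to `s`. -/
def incSig {Ω : Type*} {d : ℕ} (B : ℝ → Ω → Fin d → ℝ) (t s : ℝ) : MeasurableSpace Ω :=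
  ⨆ r ∈ Set.Icc t s, MeasurableSpace.comap (fun ω => B r ω - B t ω) inferInstance

/-- The sigma-field `F^{B^t}_∞`. -/
def incSigInf {Ω : Type*} {d : ℕ} (B : ℝ → Ω → Fin d → ℝ) (t : ℝ) : MeasurableSpace Ω :=
  ⨆ r ∈ Set.Ici t, MeasurableSpace.comap (fun ω => B r ω - B t ω) inferInstance

/-- The `P`-null sets relative to `F^{B^t}_∞`, as a sigma-field. -/
def incNull {Ω : Type*} [MeasurableSpace Ω] (P : Measure Ω) {d : ℕ}
    (B : ℝ → Ω → Fin d → ℝ) (t : ℝ) : MeasurableSpace Ω :=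
  MeasurableSpace.generateFrom
    {N | ∃ A, MeasurableSet[incSigInf B t] A ∧ P A = 0 ∧ N ⊆ A}

/-- The `P`-augmented filtration `F^{B^t,P}_s`. -/
def incAug {Ω : Type*} [MeasurableSpace Ω] (P : Measure Ω) {d : ℕ}
    (B : ℝ → Ω → Fin d → ℝ) (t s : ℝ) : MeasurableSpace Ω :=
  incSig B t s ⊔ incNull P B t

/-- A `[t,∞]`-valued stopping time of the `P`-augmented filtration `F^{B^t,P}`. -/
def IsIncStoppingTime {Ω : Type*} [MeasurableSpace Ω] (P : Measure Ω) {d : ℕ}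
    (B : ℝ → Ω → Fin d → ℝ) (t : ℝ) (τ : Ω → ENNReal) : Prop :=
  (∀ ω, ENNReal.ofReal t ≤ τ ω) ∧
  ∀ s : ℝ, t ≤ s → MeasurableSet[incAug P B t s] {ω | τ ω ≤ ENNReal.ofReal s}

/- ### Helpers -/

lemma fin_telescope {V : Type*} [AddCommGroup V] {k : ℕ} (g : Fin (k + 1) → V)
    (j : Fin (k + 1)) :
    ∑ i ∈ Finset.univ.filter (fun i : Fin k => i.succ ≤ j), (g i.succ - g i.castSucc)
      = g j - g 0 := by
  induction j using Fin.induction with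
  | zero =>
    have h : Finset.univ.filter (fun i : Fin k => i.succ ≤ (0 : Fin (k + 1))) = ∅ := by
      ext i
      simp only [Finset.mem_filter, Finset.mem_univ, true_and, Finset.notMem_empty, iff_false]
      simp only [Fin.le_def, Fin.val_succ, Fin.val_zero]
      omega
    rw [h]
    simp
  | succ j ih =>
    have h : Finset.univ.filter (fun i : Fin k => i.succ ≤ j.succ)
        = insert j (Finset.univ.filter (fun i : Fin k => i.succ ≤ j.castSucc)) := by
      ext i
      simp only [Finset.mem_filter, Finset.mem_univ, true_and, Finset.mem_insert]
      simp only [Fin.le_def, Fin.val_succ, Fin.coe_castSucc, Fin.ext_iff]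
      omega
    have hj : j ∉ Finset.univ.filter (fun i : Fin k => i.succ ≤ j.castSucc) := by
      simp only [Finset.mem_filter, Finset.mem_univ, true_and, Fin.le_def, Fin.val_succ,
        Fin.coe_castSucc]
      omega
    rw [h, Finset.sum_insert hj, ih]
    abel

lemma aug_decomp {α : Type*} [MeasurableSpace α] (μ : Measure α)
    (m₂ minf : MeasurableSpace α) {M : Set α}
    (hM : MeasurableSet[m₂ ⊔ MeasurableSpace.generateFrom
      {N | ∃ A, MeasurableSet[minf] A ∧ μ A = 0 ∧ N ⊆ A}] M) :
    ∃ A U, MeasurableSet[m₂] A ∧ MeasurableSet[minf] U ∧ μ U = 0 ∧ M ∆ A ⊆ U := by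
  have hgen : m₂ ⊔ MeasurableSpace.generateFrom
      {N | ∃ A, MeasurableSet[minf] A ∧ μ A = 0 ∧ N ⊆ A}
      = MeasurableSpace.generateFrom ({s | MeasurableSet[m₂] s}
          ∪ {N | ∃ A, MeasurableSet[minf] A ∧ μ A = 0 ∧ N ⊆ A}) := by
    rw [← MeasurableSpace.generateFrom_sup_generateFrom,
      @MeasurableSpace.generateFrom_measurableSet _ m₂]
  rw [hgen] at hM
  induction M, hM using MeasurableSpace.generateFrom_induction with
  | hC A hA _ =>
    rcases hA with h | ⟨A₀, hA₀, h0, hsub⟩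
    · exact ⟨A, ∅, h, MeasurableSet.empty, measure_empty, by simp⟩
    · refine ⟨∅, A₀, @MeasurableSet.empty _ m₂, hA₀, h0, ?_⟩
      rw [show (∅ : Set α) = ⊥ from rfl, symmDiff_bot]
      exact hsub
  | empty =>
    exact ⟨∅, ∅, @MeasurableSet.empty _ m₂, MeasurableSet.empty, measure_empty, by simp⟩
  | compl A hA ih =>
    obtain ⟨A', U, h1, h2, h3, h4⟩ := ih
    exact ⟨A'ᶜ, U, h1.compl, h2, h3, by rwa [compl_symmDiff_compl]⟩
  | iUnion f hf ih =>
    choose A U h1 h2 h3 h4 using ih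
    refine ⟨⋃ n, A n, ⋃ n, U n, MeasurableSet.iUnion h1, MeasurableSet.iUnion h2,
      measure_iUnion_null h3, ?_⟩
    intro x hx
    rw [Set.mem_symmDiff] at hx
    rcases hx with ⟨hx1, hx2⟩ | ⟨hx1, hx2⟩
    · obtain ⟨n, hn⟩ := Set.mem_iUnion.1 hx1
      have : x ∈ f n ∆ A n := Set.mem_symmDiff.2 (Or.inl ⟨hn, fun h => hx2 (Set.mem_iUnion.2 ⟨n, h⟩)⟩)
      exact Set.mem_iUnion.2 ⟨n, h4 n this⟩
    · obtain ⟨n, hn⟩ := Set.mem_iUnion.1 hx1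
      have : x ∈ f n ∆ A n := Set.mem_symmDiff.2 (Or.inr ⟨hn, fun h => hx2 (Set.mem_iUnion.2 ⟨n, h⟩)⟩)
      exact Set.mem_iUnion.2 ⟨n, h4 n this⟩


lemma bm_map_pi {Ω' : Type*} [MeasurableSpace Ω'] (μ : Measure Ω') [IsProbabilityMeasure μ]
    {d : ℕ} (X : ℝ → Ω' → Fin d → ℝ) (hX : ∀ r, Measurable (X r)) {t : ℝ}
    (hBM : IsBMAfter μ X t) {k : ℕ} (u : Fin (k + 1) → ℝ) (hu : Monotone u)
    (hut : ∀ i, t ≤ u i) :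
    μ.map (fun ω (i : Fin k) => X (u i.succ) ω - X (u i.castSucc) ω)
      = Measure.pi (fun i : Fin k => Measure.pi fun _ : Fin d =>
          gaussianReal 0 (u i.succ - u i.castSucc).toNNReal) := by
  symm
  apply Measure.pi_eq
  intro s hs
  have hincm : ∀ i : Fin k, Measurable (fun ω => X (u i.succ) ω - X (u i.castSucc) ω) :=
    fun i => (hX _).sub (hX _)
  rw [Measure.map_apply (measurable_pi_lambda _ hincm) (MeasurableSet.univ_pi hs)]
  have hpre : (fun ω (i : Fin k) => X (u i.succ) ω - X (u i.castSucc) ω) ⁻¹' (Set.univ.pi s)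
      = ⋂ i, (fun ω => X (u i.succ) ω - X (u i.castSucc) ω) ⁻¹' (s i) := by
    ext ω
    simp [Set.mem_univ_pi]
  rw [hpre, (hBM.indep k u hu hut).meas_iInter (fun i => ⟨s i, hs i, rfl⟩)]
  refine Finset.prod_congr rfl fun i _ => ?_
  rw [← Measure.map_apply (hincm i) (hs i),
    hBM.gauss _ _ (hut _) (hu (Fin.castSucc_le_succ i))]

lemma bm_cylinder {Ω' : Type*} [MeasurableSpace Ω'] (μ : Measure Ω') [IsProbabilityMeasure μ]
    {d : ℕ} (X : ℝ → Ω' → Fin d → ℝ) (hX : ∀ r, Measurable (X r)) {t : ℝ}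
    (hBM : IsBMAfter μ X t) (G : Finset ℝ) (hG : ↑G ⊆ Set.Ici t) (htG : t ∈ G)
    {k : ℕ} (hk : G.card = k + 1) (S : ℝ → Set (Fin d → ℝ))
    (hS : ∀ r ∈ G, MeasurableSet (S r)) :
    μ (⋂ r ∈ G, {ω | X r ω - X t ω ∈ S r}) =
      ((Measure.pi (fun i : Fin k => Measure.pi fun _ : Fin d =>
          gaussianReal 0 ((G.orderIsoOfFin hk i.succ : ℝ)
            - (G.orderIsoOfFin hk i.castSucc : ℝ)).toNNReal)).map
        (fun v (r : ↑G) => ∑ i ∈ Finset.univ.filter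
            (fun i : Fin k => i.succ ≤ (G.orderIsoOfFin hk).symm r), v i))
      (Set.univ.pi fun r : ↑G => S ↑r) := by
  set e := G.orderIsoOfFin hk with he
  have humono : Monotone fun i : Fin (k + 1) => (e i : ℝ) :=
    fun i j hij => Subtype.coe_le_coe.2 (e.monotone hij)
  have hut : ∀ i, t ≤ (e i : ℝ) := fun i => hG (e i).2
  have hu0 : (e 0 : ℝ) = t := by
    refine le_antisymm ?_ (hut 0)
    have h1 : e 0 ≤ e (e.symm ⟨t, htG⟩) := e.monotone (Fin.zero_le _)
    rw [e.apply_symm_apply] at h1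
    exact h1
  set L : (Fin k → Fin d → ℝ) → (↑G → Fin d → ℝ) := fun v r =>
    ∑ i ∈ Finset.univ.filter (fun i : Fin k => i.succ ≤ e.symm r), v i with hL
  have hLmeas : Measurable L :=
    measurable_pi_lambda _ fun r => Finset.measurable_sum _ fun i _ => measurable_pi_apply i
  have hincm : Measurable (fun ω (i : Fin k) =>
      X (e i.succ : ℝ) ω - X (e i.castSucc : ℝ) ω) :=
    measurable_pi_lambda _ fun i => (hX _).sub (hX _)
  have hvec : (fun ω (r : ↑G) => X (r : ℝ) ω - X t ω)
      = L ∘ (fun ω (i : Fin k) => X (e i.succ : ℝ) ω - X (e i.castSucc : ℝ) ω) := by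
    funext ω r
    have htel := fin_telescope (fun i : Fin (k + 1) => X (e i : ℝ) ω) (e.symm r)
    simp only [Function.comp_apply, hL]
    rw [htel, e.apply_symm_apply, hu0]
  have hset : (⋂ r ∈ G, {ω | X r ω - X t ω ∈ S r})
      = (fun ω (r : ↑G) => X (r : ℝ) ω - X t ω) ⁻¹' (Set.univ.pi fun r : ↑G => S ↑r) := by
    ext ω
    simp only [Set.mem_iInter, Set.mem_setOf_eq, Set.mem_preimage, Set.mem_univ_pi,
      Subtype.forall]
  have hT : MeasurableSet (Set.univ.pi fun r : ↑G => S ↑r) :=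
    MeasurableSet.univ_pi fun r => hS r r.2
  rw [hset, hvec, ← Measure.map_apply (hLmeas.comp hincm) hT,
    ← Measure.map_map hLmeas hincm, bm_map_pi μ X hX hBM _ humono hut]

lemma biInter_insert_univ {α β : Type*} [DecidableEq α] (t : α) (F : Finset α) (E : α → Set β)
    (hE : t ∉ F → E t = Set.univ) : ⋂ r ∈ insert t F, E r = ⋂ r ∈ F, E r := by
  by_cases htF : t ∈ F
  · rw [Finset.insert_eq_self.2 htF]
  · rw [Finset.set_biInter_insert, hE htF, Set.univ_inter]

lemma bm_cylinder_eq {Ω₁ Ω₂ : Type*} [MeasurableSpace Ω₁] [MeasurableSpace Ω₂]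
    (μ₁ : Measure Ω₁) (μ₂ : Measure Ω₂) [IsProbabilityMeasure μ₁] [IsProbabilityMeasure μ₂]
    {d : ℕ} (X : ℝ → Ω₁ → Fin d → ℝ) (Y : ℝ → Ω₂ → Fin d → ℝ)
    (hX : ∀ r, Measurable (X r)) (hY : ∀ r, Measurable (Y r)) {t : ℝ}
    (hXBM : IsBMAfter μ₁ X t) (hYBM : IsBMAfter μ₂ Y t)
    (F : Finset ℝ) (hF : ↑F ⊆ Set.Ici t)
    (S : ℝ → Set (Fin d → ℝ)) (hS : ∀ r ∈ F, MeasurableSet (S r)) :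
    μ₁ (⋂ r ∈ F, {ω | X r ω - X t ω ∈ S r}) = μ₂ (⋂ r ∈ F, {ω | Y r ω - Y t ω ∈ S r}) := by
  classical
  set G := insert t F with hGdef
  set S' : ℝ → Set (Fin d → ℝ) := fun r => if r ∈ F then S r else Set.univ with hS'def
  have hG : ↑G ⊆ Set.Ici t := by
    intro r hr
    rcases Finset.mem_insert.1 hr with h | h
    · exact h.ge
    · exact hF h
  have hS' : ∀ r ∈ G, MeasurableSet (S' r) := by
    intro r _
    by_cases h : r ∈ F
    · simpa [hS'def, h] using hS r h
    · simp [hS'def, h]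
  obtain ⟨k, hk⟩ : ∃ k, G.card = k + 1 := by
    have : 0 < G.card := Finset.card_pos.2 ⟨t, Finset.mem_insert_self t F⟩
    exact ⟨G.card - 1, by omega⟩
  have hXr : (⋂ r ∈ F, {ω : Ω₁ | X r ω - X t ω ∈ S r})
      = ⋂ r ∈ G, {ω | X r ω - X t ω ∈ S' r} := by
    rw [hGdef, biInter_insert_univ t F _ (fun htF => by simp [hS'def, htF])]
    exact Set.iInter₂_congr fun r hr => by simp [hS'def, hr]
  have hYr : (⋂ r ∈ F, {ω : Ω₂ | Y r ω - Y t ω ∈ S r})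
      = ⋂ r ∈ G, {ω | Y r ω - Y t ω ∈ S' r} := by
    rw [hGdef, biInter_insert_univ t F _ (fun htF => by simp [hS'def, htF])]
    exact Set.iInter₂_congr fun r hr => by simp [hS'def, hr]
  rw [hXr, hYr,
    bm_cylinder μ₁ X hX hXBM G hG (Finset.mem_insert_self t F) hk S' hS',
    bm_cylinder μ₂ Y hY hYBM G hG (Finset.mem_insert_self t F) hk S' hS']


lemma comap_incSig {Ω : Type*} {d : ℕ} (B : ℝ → Ω → Fin d → ℝ) (t : ℝ) (Φ : Ω → PathSp d)
    (hΦ : ∀ s : ℝ, t ≤ s → ∀ ω, Φ ω s - Φ ω t = B s ω - B t ω) (s : ℝ) :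
    MeasurableSpace.comap Φ (incSig (fun r (x : PathSp d) => x r) t s) = incSig B t s := by
  unfold incSig
  simp only [MeasurableSpace.comap_iSup]
  refine iSup_congr fun r => iSup_congr fun hr => ?_
  rw [MeasurableSpace.comap_comp]
  congr 1
  funext ω
  exact hΦ r hr.1 ω

lemma comap_incSigInf {Ω : Type*} {d : ℕ} (B : ℝ → Ω → Fin d → ℝ) (t : ℝ) (Φ : Ω → PathSp d)
    (hΦ : ∀ s : ℝ, t ≤ s → ∀ ω, Φ ω s - Φ ω t = B s ω - B t ω) :
    MeasurableSpace.comap Φ (incSigInf (fun r (x : PathSp d) => x r) t) = incSigInf B t := by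
  unfold incSigInf
  simp only [MeasurableSpace.comap_iSup]
  refine iSup_congr fun r => iSup_congr fun hr => ?_
  rw [MeasurableSpace.comap_comp]
  congr 1
  funext ω
  exact hΦ r hr ω

lemma eval_measurable {d : ℕ} (r : ℝ) : Measurable fun x : PathSp d => x r :=
  (continuous_eval_const r).measurable

lemma incSigInf_le_borel (d : ℕ) (t : ℝ) :
    incSigInf (fun r (x : PathSp d) => x r) t ≤ (inferInstance : MeasurableSpace (PathSp d)) :=
  iSup₂_le fun r _ => ((eval_measurable r).sub (eval_measurable t)).comap_le

lemma incSig_le_incSigInf {Ω : Type*} {d : ℕ} (B : ℝ → Ω → Fin d → ℝ) (t s : ℝ) :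
    incSig B t s ≤ incSigInf B t :=
  iSup₂_le fun r hr => le_iSup₂ (f := fun (r : ℝ) (_ : r ∈ Set.Ici t) =>
    MeasurableSpace.comap (fun ω => B r ω - B t ω) inferInstance) r hr.1

lemma incSigInf_le {Ω : Type*} [mΩ : MeasurableSpace Ω] {d : ℕ} (B : ℝ → Ω → Fin d → ℝ)
    (hB : ∀ r, Measurable (B r)) (t : ℝ) : incSigInf B t ≤ mΩ :=
  iSup₂_le fun r _ => ((hB r).sub (hB t)).comap_le

lemma transfer {Ω : Type*} [MeasurableSpace Ω] (P : Measure Ω) [IsProbabilityMeasure P]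
    {d : ℕ} {t : ℝ} (B : ℝ → Ω → Fin d → ℝ) (hBmeas : ∀ s, Measurable (B s))
    (hBM : IsBMAfter P B t)
    (P₀ : Measure (PathSp d)) [IsProbabilityMeasure P₀]
    (hWBM : IsBMAfter P₀ (fun s (x : PathSp d) => x s) t)
    (Φ : Ω → PathSp d) (hΦ : ∀ s : ℝ, t ≤ s → ∀ ω, Φ ω s - Φ ω t = B s ω - B t ω) :
    ∀ A : Set (PathSp d), MeasurableSet[incSigInf (fun s (x : PathSp d) => x s) t] A →
      P₀ A = P (Φ ⁻¹' A) := by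
  classical
  have hWmeas : ∀ r : ℝ, Measurable fun x : PathSp d => x r := eval_measurable
  have hpre_meas : ∀ A : Set (PathSp d),
      MeasurableSet[incSigInf (fun s (x : PathSp d) => x s) t] A →
      MeasurableSet[incSigInf B t] (Φ ⁻¹' A) := by
    intro A hA
    rw [← comap_incSigInf B t Φ hΦ]
    exact ⟨A, hA, rfl⟩
  have hBle : incSigInf B t ≤ ‹MeasurableSpace Ω› := incSigInf_le B hBmeas t
  have hWle : incSigInf (fun s (x : PathSp d) => x s) t
      ≤ (inferInstance : MeasurableSpace (PathSp d)) := incSigInf_le_borel d t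
  have h_eq : incSigInf (fun s (x : PathSp d) => x s) t
      = MeasurableSpace.generateFrom (piiUnionInter
          (fun r : ℝ => {s | MeasurableSet[MeasurableSpace.comap
            (fun x : PathSp d => x r - x t) inferInstance] s}) (Set.Ici t)) := by
    unfold incSigInf
    exact (generateFrom_piiUnionInter_measurableSet
      (fun r : ℝ => MeasurableSpace.comap (fun x : PathSp d => x r - x t) inferInstance)
      (Set.Ici t)).symm
  have h_pi : IsPiSystem (piiUnionInter
      (fun r : ℝ => {s | MeasurableSet[MeasurableSpace.comap
        (fun x : PathSp d => x r - x t) inferInstance] s}) (Set.Ici t)) :=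
    isPiSystem_piiUnionInter _
      (fun r => @MeasurableSpace.isPiSystem_measurableSet (PathSp d)
        (MeasurableSpace.comap (fun x : PathSp d => x r - x t) inferInstance)) _
  refine MeasurableSpace.induction_on_inter (C := fun A _ => P₀ A = P (Φ ⁻¹' A))
    (m := incSigInf (fun s (x : PathSp d) => x s) t) h_eq h_pi ?_ ?_ ?_ ?_
  · simp
  · rintro A ⟨F, hFsub, f, hf, rfl⟩
    have hf' : ∀ r ∈ F, ∃ s' : Set (Fin d → ℝ), MeasurableSet s' ∧
        (fun x : PathSp d => x r - x t) ⁻¹' s' = f r := by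
      intro r hr
      exact hf r hr
    choose! S hS1 hS2 using hf'
    have hAeq : (⋂ x ∈ F, f x) = ⋂ r ∈ F, {x : PathSp d | x r - x t ∈ S r} :=
      Set.iInter₂_congr fun r hr => (hS2 r hr).symm
    have hpre : Φ ⁻¹' (⋂ r ∈ F, {x : PathSp d | x r - x t ∈ S r})
        = ⋂ r ∈ F, {ω | B r ω - B t ω ∈ S r} := by
      ext ω
      simp only [Set.mem_preimage, Set.mem_iInter, Set.mem_setOf_eq]
      refine forall₂_congr fun r hr => ?_
      rw [hΦ r (hFsub hr) ω]
    rw [hAeq, hpre]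
    exact bm_cylinder_eq P₀ P (fun s (x : PathSp d) => x s) B hWmeas hBmeas hWBM hBM
      F hFsub S hS1
  · intro A hAm ih
    rw [Set.preimage_compl,
      measure_compl (hWle _ hAm) (measure_ne_top _ _),
      measure_compl (hBle _ (hpre_meas A hAm)) (measure_ne_top _ _),
      measure_univ, measure_univ, ih]
  · intro f hdisj hmeas ih
    rw [Set.preimage_iUnion,
      measure_iUnion hdisj (fun i => hWle _ (hmeas i)),
      measure_iUnion (fun i j hij => (hdisj hij).preimage Φ)
        (fun i => hBle _ (hpre_meas _ (hmeas i)))]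
    exact tsum_congr ih



/-- If `B^t` is a Brownian motion on `(Ω, F, P)` and `Φ : Ω → Ω₀` satisfies
`W^t_s(Φ(ω)) = B^t_s(ω)` for all `s ≥ t` (with `W` the canonical process on Wiener space
`(Ω₀, B(Ω₀), P₀)`), then every `[t,∞]`-valued `F^{B^t,P}`-stopping time `τ` on `Ω` is,
`P`-a.s., of the form `τ̂ ∘ Φ` for some `[t,∞]`-valued `F^{W^t,P₀}`-stopping time `τ̂`. -/
theorem stmt11 {Ω : Type*} [MeasurableSpace Ω] (P : Measure Ω) [IsProbabilityMeasure P]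
    (d : ℕ) (t : ℝ) (ht : 0 ≤ t)
    (B : ℝ → Ω → Fin d → ℝ)
    (hBmeas : ∀ s : ℝ, Measurable (B s))
    (hBcont : ∀ ω, Continuous fun s => B s ω)
    (hB0 : ∀ ω, B 0 ω = 0)
    (hBM : IsBMAfter P B t)
    (P₀ : Measure (PathSp d)) [IsProbabilityMeasure P₀]
    (hP₀ : IsBMAfter P₀ (fun s ω => ω s) 0)
    (hP₀start : ∀ᵐ ω ∂P₀, ω 0 = 0)
    (Φ : Ω → PathSp d)
    (hΦ : ∀ s : ℝ, t ≤ s → ∀ ω, Φ ω s - Φ ω t = B s ω - B t ω)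
    (τ : Ω → ENNReal) (hτ : IsIncStoppingTime P B t τ) :
    ∃ τ' : PathSp d → ENNReal,
      IsIncStoppingTime P₀ (fun s ω => ω s) t τ' ∧ ∀ᵐ ω ∂P, τ ω = τ' (Φ ω) := by
  classical
  have hWBM : IsBMAfter P₀ (fun s (x : PathSp d) => x s) t :=
    ⟨fun n u hu hut => hP₀.indep n u hu (fun i => ht.trans (hut i)),
     fun s r hs hsr => hP₀.gauss s r (ht.trans hs) hsr⟩
  have htrans := transfer P B hBmeas hBM P₀ hWBM Φ hΦ
  -- choose approximating sets
  have key : ∀ s : ℝ, t ≤ s → ∃ (Ahat : Set (PathSp d)) (U : Set Ω),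
      MeasurableSet[incSig (fun r (x : PathSp d) => x r) t s] Ahat ∧
      MeasurableSet[incSigInf B t] U ∧ P U = 0 ∧
      {ω | τ ω ≤ ENNReal.ofReal s} ∆ (Φ ⁻¹' Ahat) ⊆ U := by
    intro s hs
    have h := hτ.2 s hs
    obtain ⟨A, U, hA, hU, hU0, hsub⟩ := aug_decomp P (incSig B t s) (incSigInf B t) h
    rw [← comap_incSig B t Φ hΦ s] at hA
    obtain ⟨Ahat, hAhat, hpre⟩ := hA
    exact ⟨Ahat, U, hAhat, hU, hU0, by rw [hpre]; exact hsub⟩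
  choose! hatA U hmeasA hmeasU hU0 hsub using key
  set τ' : PathSp d → ENNReal := fun x =>
    ⨅ q : ℚ, if t ≤ (q : ℝ) ∧ x ∈ hatA q then ENNReal.ofReal q else ⊤ with hτ'def
  set E : Set Ω := ⋃ q : ℚ, ⋃ (_ : t ≤ (q : ℝ)), U q with hEdef
  have hE0 : P E = 0 := measure_iUnion_null fun q => measure_iUnion_null fun hq => hU0 q hq
  have hgood : ∀ ω, ω ∉ E → τ' (Φ ω) = τ ω := by
    intro ω hω
    have hiff : ∀ q : ℚ, t ≤ (q : ℝ) → (Φ ω ∈ hatA q ↔ τ ω ≤ ENNReal.ofReal q) := by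
      intro q hq
      have hωU : ω ∉ U (q : ℝ) := fun h =>
        hω (Set.mem_iUnion.2 ⟨q, Set.mem_iUnion.2 ⟨hq, h⟩⟩)
      have hs' := hsub (q : ℝ) hq
      constructor
      · intro hmem
        by_contra hτn
        exact hωU (hs' (Set.mem_symmDiff.2 (Or.inr ⟨hmem, hτn⟩)))
      · intro hτq
        by_contra hmem
        exact hωU (hs' (Set.mem_symmDiff.2 (Or.inl ⟨hτq, hmem⟩)))
    refine le_antisymm ?_ ?_
    · refine ENNReal.le_of_forall_pos_le_add fun ε hε hlt => ?_
      have htoReal : t ≤ (τ ω).toReal :=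
        (ENNReal.ofReal_le_iff_le_toReal hlt.ne).1 (hτ.1 ω)
      obtain ⟨q, hq1, hq2⟩ := exists_rat_btwn
        (lt_add_of_pos_right (τ ω).toReal (show (0:ℝ) < (ε:ℝ) from hε))
      have hqt : t ≤ (q : ℝ) := htoReal.trans hq1.le
      have hτq : τ ω ≤ ENNReal.ofReal q := by
        rw [← ENNReal.ofReal_toReal hlt.ne]
        exact ENNReal.ofReal_le_ofReal hq1.le
      calc τ' (Φ ω) ≤ (if t ≤ (q:ℝ) ∧ Φ ω ∈ hatA q then ENNReal.ofReal q else ⊤) :=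
            iInf_le _ q
        _ = ENNReal.ofReal q := if_pos ⟨hqt, (hiff q hqt).2 hτq⟩
        _ ≤ ENNReal.ofReal ((τ ω).toReal + (ε:ℝ)) := ENNReal.ofReal_le_ofReal hq2.le
        _ = τ ω + ε := by
            rw [ENNReal.ofReal_add ENNReal.toReal_nonneg ε.coe_nonneg,
              ENNReal.ofReal_toReal hlt.ne, ENNReal.ofReal_coe_nnreal]
    · refine le_iInf fun q => ?_
      split_ifs with h
      · exact (hiff q h.1).1 h.2
      · exact le_top
  refine ⟨τ', ⟨fun x => le_iInf fun q => ?_, fun s hs => ?_⟩, ?_⟩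
  · split_ifs with h
    · exact ENNReal.ofReal_le_ofReal h.1
    · exact le_top
  · -- stopping time property at time s
    have hWs_le : ∀ q : ℝ, t ≤ q →
        incSig (fun r (x : PathSp d) => x r) t q ≤ incSigInf (fun r (x : PathSp d) => x r) t :=
      fun q _ => incSig_le_incSigInf _ t q
    have hMW : MeasurableSet[incSigInf (fun r (x : PathSp d) => x r) t]
        {x | τ' x ≤ ENNReal.ofReal s} := by
      have hmτ' : Measurable[incSigInf (fun r (x : PathSp d) => x r) t] τ' := by
        refine Measurable.iInf fun q => ?_
        by_cases hq : t ≤ (q : ℝ)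
        · have hset : MeasurableSet[incSigInf (fun r (x : PathSp d) => x r) t]
              {x | t ≤ (q : ℝ) ∧ x ∈ hatA q} := by
            have : {x : PathSp d | t ≤ (q : ℝ) ∧ x ∈ hatA q} = hatA q := by
              ext x; simp [hq]
            rw [this]
            exact hWs_le q hq _ (hmeasA q hq)
          exact Measurable.ite hset measurable_const measurable_const
        · have : (fun x : PathSp d =>
              if t ≤ (q : ℝ) ∧ x ∈ hatA q then ENNReal.ofReal q else ⊤)
              = fun _ => ⊤ := by
            funext x
            rw [if_neg (fun h => hq h.1)]
          rw [this]
          exact measurable_const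
      exact hmτ' measurableSet_Iic
    set M : Set (PathSp d) := {x | τ' x ≤ ENNReal.ofReal s} with hMdef
    set K : Set (PathSp d) := M ∆ hatA s with hKdef
    have hKW : MeasurableSet[incSigInf (fun r (x : PathSp d) => x r) t] K := by
      rw [hKdef, Set.symmDiff_def]
      exact (hMW.diff (hWs_le s hs _ (hmeasA s hs))).union
        ((hWs_le s hs _ (hmeasA s hs)).diff hMW)
    have hPK : P (Φ ⁻¹' K) = 0 := by
      have hsubK : Φ ⁻¹' K ⊆ E ∪ U s := by
        intro ω hω
        rw [Set.mem_preimage, hKdef, Set.mem_symmDiff] at hω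
        by_cases hωE : ω ∈ E
        · exact Or.inl hωE
        · right
          apply hsub s hs
          rw [Set.mem_symmDiff]
          have hg := hgood ω hωE
          rcases hω with ⟨h1, h2⟩ | ⟨h1, h2⟩
          · exact Or.inl ⟨by rw [Set.mem_setOf_eq, ← hg]; exact h1, h2⟩
          · refine Or.inr ⟨h1, fun hc => h2 ?_⟩
            rw [hMdef, Set.mem_setOf_eq, hg]
            exact hc
      exact measure_mono_null hsubK (measure_union_null hE0 (hU0 s hs))
    have hP₀K : P₀ K = 0 := by rw [htrans K hKW]; exact hPK
    have hKnull : MeasurableSet[incNull P₀ (fun s (x : PathSp d) => x s) t] K :=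
      MeasurableSpace.measurableSet_generateFrom ⟨K, hKW, hP₀K, subset_rfl⟩
    have hMeq : M = hatA s ∆ K := by
      rw [hKdef, symmDiff_comm M (hatA s), symmDiff_symmDiff_cancel_left]
    rw [hMeq, Set.symmDiff_def]
    have h1 : MeasurableSet[incAug P₀ (fun s (x : PathSp d) => x s) t s] (hatA s) :=
      (le_sup_left : incSig (fun s (x : PathSp d) => x s) t s
        ≤ incAug P₀ (fun s (x : PathSp d) => x s) t s) _ (hmeasA s hs)
    have h2 : MeasurableSet[incAug P₀ (fun s (x : PathSp d) => x s) t s] K :=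
      (le_sup_right : incNull P₀ (fun s (x : PathSp d) => x s) t
        ≤ incAug P₀ (fun s (x : PathSp d) => x s) t s) _ hKnull
    exact (h1.diff h2).union (h2.diff h1)
  · -- a.s. equality
    refine ae_iff.2 (measure_mono_null ?_ hE0)
    intro ω hω
    simp only [Set.mem_setOf_eq] at hω
    by_contra hωE
    exact hω ((hgood ω hωE).symm)


end
end

section
/- Let U be a Polish space homeomorphic via I to a Borel subset E of [0,1], let (Ω₀, B(Ω₀), P₀) be Wiener space with canonical process W, and let μ = {μ_s}_{s≥0} be a U-valued process, predictable with respect to the P₀-augmented Brownian filtration F^{W,P₀}, whose every path s ↦ μ_s(ω₀) is a Borel function [0,∞) → U. Then for every Borel set A in the space J = L⁰([0,∞); U) (with the Borel sigma-field induced by the weak topology of the embedding ι_J), the set {ω₀ ∈ Ω₀ : μ_·(ω₀) ∈ A} belongs to the P₀-completion F^{W,P₀}_∞. -/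
open MeasureTheory ProbabilityTheory

noncomputable section

/-- `P` is a Wiener measure: the canonical process is a `d`-dimensional Brownian motion
started at `0`. -/
structure IsWiener {d : ℕ} (P : Measure (PathSp d)) : Prop where
  prob : IsProbabilityMeasure P
  start : ∀ᵐ ω ∂P, ω 0 = 0
  indep : ∀ (n : ℕ) (t : Fin (n + 1) → ℝ), Monotone t → (∀ i, 0 ≤ t i) →
    iIndepFun
      (fun (i : Fin n) (ω : PathSp d) => ω (t i.succ) - ω (t i.castSucc)) P
  gauss : ∀ s r : ℝ, 0 ≤ s → s ≤ r →
    P.map (fun ω : PathSp d => ω r - ω s) =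
      Measure.pi fun _ : Fin d => gaussianReal 0 (r - s).toNNReal

/-- The raw filtration `F^W_s` of the canonical process. -/
def canSig (d : ℕ) (s : ℝ) : MeasurableSpace (PathSp d) :=
  ⨆ r ∈ Set.Icc (0 : ℝ) s, MeasurableSpace.comap (fun ω : PathSp d => ω r) inferInstance

/-- The sigma-field `F^W_∞`. -/
def canSigInf (d : ℕ) : MeasurableSpace (PathSp d) :=
  ⨆ r ∈ Set.Ici (0 : ℝ), MeasurableSpace.comap (fun ω : PathSp d => ω r) inferInstance

/-- `P`-null sets relative to `F^W_∞`, as a sigma-field. -/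
def wienerNull (d : ℕ) (P : Measure (PathSp d)) : MeasurableSpace (PathSp d) :=
  MeasurableSpace.generateFrom
    {N | ∃ A, MeasurableSet[canSigInf d] A ∧ P A = 0 ∧ N ⊆ A}

/-- The `P`-augmented Brownian filtration `F^{W,P}_s`. -/
def augSig (d : ℕ) (P : Measure (PathSp d)) (s : ℝ) : MeasurableSpace (PathSp d) :=
  canSig d s ⊔ wienerNull d P

/-- The predictable sigma-field on `[0,∞) × Ω` associated with a filtration `F`, generated
by the sets `{0} × A`, `A ∈ F 0`, and `(s,∞) × A`, `A ∈ F s`, `s ≥ 0`. -/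
def predSigma {Ω : Type*} (F : ℝ → MeasurableSpace Ω) : MeasurableSpace (ℝ × Ω) :=
  MeasurableSpace.generateFrom
    ({S | ∃ A : Set Ω, MeasurableSet[F 0] A ∧ S = ({0} : Set ℝ) ×ˢ A} ∪
     {S | ∃ s : ℝ, 0 ≤ s ∧ ∃ A : Set Ω, MeasurableSet[F s] A ∧ S = Set.Ioi s ×ˢ A})

/-- The functional `I_φ(u) = ∫₀^∞ φ(s,u(s)) ds = ∫₀^∞ φ⁺(s,u(s)) ds − ∫₀^∞ φ⁻(s,u(s)) ds`,
with values in `[−∞,∞]`. -/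
def IfunE {U : Type*} (φ : ℝ × U → ℝ) (u : ℝ → U) : EReal :=
  ((∫⁻ s in Set.Ioi (0 : ℝ), ENNReal.ofReal (φ (s, u s))) : EReal) -
  ((∫⁻ s in Set.Ioi (0 : ℝ), ENNReal.ofReal (-φ (s, u s))) : EReal)

/-- The Borel sigma-field of `J = L⁰([0,∞); U)`, generated by the functionals `I_φ`
over Borel `φ` (see Lemma M29_01 of the paper). -/
def JSigma (U : Type*) [MeasurableSpace U] : MeasurableSpace (ℝ → U) :=
  ⨆ (φ : ℝ × U → ℝ) (_ : Measurable φ), MeasurableSpace.comap (IfunE φ) inferInstance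

lemma measurable_ereal_sub_ennreal :
    Measurable fun p : ENNReal × ENNReal => ((p.1 : EReal) - (p.2 : EReal)) := by
  have hcoe : ∀ a : ENNReal, a ≠ ⊤ → (a : EReal) = ((a.toReal : ℝ) : EReal) := by
    intro a ha
    rw [show ((a.toReal : ℝ) : EReal) = (((a : EReal).toReal : ℝ) : EReal) by
      rw [EReal.toReal_coe_ennreal]]
    exact (EReal.coe_toReal (by simpa [EReal.coe_ennreal_eq_top_iff] using ha)
      (EReal.coe_ennreal_ne_bot _)).symm
  have heq : (fun p : ENNReal × ENNReal => ((p.1 : EReal) - (p.2 : EReal))) =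
      fun p => if p.2 = ⊤ then (⊥ : EReal) else
        if p.1 = ⊤ then (⊤ : EReal) else ((p.1.toReal - p.2.toReal : ℝ) : EReal) := by
    funext p
    by_cases h2 : p.2 = ⊤
    · rw [if_pos h2, h2, EReal.coe_ennreal_top, EReal.sub_top]
    · rw [if_neg h2]
      by_cases h1 : p.1 = ⊤
      · rw [if_pos h1, h1, EReal.coe_ennreal_top, hcoe _ h2, EReal.top_sub_coe]
      · rw [if_neg h1, hcoe _ h1, hcoe _ h2, EReal.coe_sub]
  rw [heq]
  refine Measurable.ite (measurable_snd (measurableSet_singleton ⊤)) measurable_const ?_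
  refine Measurable.ite (measurable_fst (measurableSet_singleton ⊤)) measurable_const ?_
  exact measurable_coe_real_ereal.comp
    ((ENNReal.measurable_toReal.comp measurable_fst).sub
      (ENNReal.measurable_toReal.comp measurable_snd))

lemma aux_Ifun {Ω : Type*} [mΩ : MeasurableSpace Ω] {U : Type*} [MeasurableSpace U]
    (μ : ℝ → Ω → U) (hμ : Measurable fun p : ℝ × Ω => μ p.1 p.2)
    (φ : ℝ × U → ℝ) (hφ : Measurable φ) :
    Measurable fun ω => IfunE φ (fun s => μ s ω) := by
  have hcomp : Measurable fun p : ℝ × Ω => φ (p.1, μ p.1 p.2) :=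
    hφ.comp (measurable_fst.prodMk hμ)
  have ha : Measurable fun ω : Ω =>
      ∫⁻ s in Set.Ioi (0 : ℝ), ENNReal.ofReal (φ (s, μ s ω)) :=
    Measurable.lintegral_prod_left' (ENNReal.measurable_ofReal.comp hcomp)
  have hb : Measurable fun ω : Ω =>
      ∫⁻ s in Set.Ioi (0 : ℝ), ENNReal.ofReal (-φ (s, μ s ω)) :=
    Measurable.lintegral_prod_left' (ENNReal.measurable_ofReal.comp hcomp.neg)
  exact measurable_ereal_sub_ennreal.comp (ha.prodMk hb)

/-- If `μ` is an `U`-valued process on Wiener space which is predictable with respect to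
the `P₀`-augmented Brownian filtration and has Borel paths, then for every Borel set `A`
of `J = L⁰([0,∞); U)` the set `{ω₀ : μ_·(ω₀) ∈ A}` belongs to `F^{W,P₀}_∞`. -/
theorem stmt14 (d : ℕ) {U : Type*} [TopologicalSpace U] [PolishSpace U]
    [MeasurableSpace U] [BorelSpace U]
    (P₀ : Measure (PathSp d)) (hP₀ : IsWiener P₀)
    (μ : ℝ → PathSp d → U)
    (hpred : Measurable[predSigma (augSig d P₀)] fun p : ℝ × PathSp d => μ p.1 p.2)
    (hpaths : ∀ ω, Measurable fun s => μ s ω) :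
    ∀ A : Set (ℝ → U), MeasurableSet[JSigma U] A →
      MeasurableSet[canSigInf d ⊔ wienerNull d P₀] {ω | (fun s => μ s ω) ∈ A} := by
  set M : MeasurableSpace (PathSp d) := canSigInf d ⊔ wienerNull d P₀ with hM
  have haug : ∀ s : ℝ, augSig d P₀ s ≤ M := by
    intro s
    refine sup_le ?_ le_sup_right
    refine le_trans ?_ le_sup_left
    refine iSup₂_le fun r hr => ?_
    exact le_iSup₂ (f := fun (r : ℝ) (_ : r ∈ Set.Ici (0 : ℝ)) =>
      MeasurableSpace.comap (fun ω : PathSp d => ω r) inferInstance) r hr.1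
  have hle : predSigma (augSig d P₀) ≤ @Prod.instMeasurableSpace ℝ (PathSp d) _ M := by
    refine MeasurableSpace.generateFrom_le ?_
    rintro S (⟨B, hB, rfl⟩ | ⟨s, _, B, hB, rfl⟩)
    · exact @MeasurableSet.prod ℝ (PathSp d) _ M _ _ (measurableSet_singleton 0)
        (haug 0 B hB)
    · exact @MeasurableSet.prod ℝ (PathSp d) _ M _ _ measurableSet_Ioi (haug s B hB)
  have hμM : @Measurable (ℝ × PathSp d) U (@Prod.instMeasurableSpace ℝ (PathSp d) _ M) _
      (fun p => μ p.1 p.2) := hpred.mono hle le_rfl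
  have key : ∀ φ : ℝ × U → ℝ, Measurable φ →
      @Measurable (PathSp d) EReal M _ (fun ω => IfunE φ (fun s => μ s ω)) :=
    fun φ hφ => @aux_Ifun (PathSp d) M U _ μ hμM φ hφ
  have hg : @Measurable (PathSp d) (ℝ → U) M (JSigma U) (fun ω s => μ s ω) := by
    rw [@measurable_iff_comap_le, JSigma, MeasurableSpace.comap_iSup]
    refine iSup_le fun φ => ?_
    rw [MeasurableSpace.comap_iSup]
    refine iSup_le fun hφ => ?_
    rw [MeasurableSpace.comap_comp]
    exact measurable_iff_comap_le.mp (key φ hφ)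
  intro A hA
  exact hg hA

end
end

section
/- Let U be a Polish space and J = L⁰([0,∞); U). The Borel sigma-field B(J) of the topology T♯(J) induced from the weak topology on P([0,∞) × U) via the embedding ι_J(u) = e^{−t}δ_{u(t)} dt equals the sigma-field generated by the family of functionals I_φ(u) := ∫₀^∞ φ(s, u(s)) ds, as φ ranges over all real-valued Borel-measurable functions on (0,∞) × U (with I_φ = ∫ φ⁺ − ∫ φ⁻, values in [−∞,∞]). -/
open MeasureTheory

noncomputable section

/-- Representatives of `J = L⁰([0,∞); U)`: Borel-measurable functions. -/
def MJ (U : Type*) [MeasurableSpace U] : Type _ := {u : ℝ → U // Measurable u}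

/-- The topology `T♯(J)` induced on `J` from the topology of weak convergence of measures
through the embedding `ι_J(u) = e^{−t} δ_{u(t)}(du) dt`: the initial topology of the maps
`u ↦ ∫ φ dι_J(u) = ∫₀^∞ e^{−s} φ(s,u(s)) ds`, over bounded continuous `φ`. -/
def weakTopJ (U : Type*) [TopologicalSpace U] [MeasurableSpace U] :
    TopologicalSpace (MJ U) :=
  ⨅ (φ : BoundedContinuousFunction (ℝ × U) ℝ),
    TopologicalSpace.induced
      (fun u : MJ U => ∫ s in Set.Ioi (0 : ℝ), Real.exp (-s) * φ (s, u.1 s)) inferInstance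

namespace Stmt15Aux

open Set Metric Filter Topology
open scoped ENNReal NNReal

/-! ### EReal auxiliary lemmas -/

lemma coe_ennreal_eq_coe_real {c : ℝ≥0∞} (hc : c ≠ ⊤) :
    (c : EReal) = ((c.toReal : ℝ) : EReal) := by
  have h1 : (c : EReal) ≠ ⊤ := by simpa using hc
  have h2 : (c : EReal) ≠ ⊥ := by
    intro h
    have := EReal.coe_ennreal_nonneg c
    rw [h] at this
    simp at this
  rw [← EReal.coe_toReal h1 h2, EReal.toReal_coe_ennreal]

lemma measurable_esub :
    Measurable fun p : ℝ≥0∞ × ℝ≥0∞ => (p.1 : EReal) - (p.2 : EReal) := by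
  have heq : (fun p : ℝ≥0∞ × ℝ≥0∞ => (p.1 : EReal) - (p.2 : EReal)) = fun p =>
      if p.2 = ⊤ then (⊥ : EReal) else if p.1 = ⊤ then (⊤ : EReal)
        else (((p.1.toReal - p.2.toReal : ℝ)) : EReal) := by
    funext p
    rcases eq_or_ne p.2 ⊤ with h2 | h2
    · rw [if_pos h2, h2, EReal.coe_ennreal_top, EReal.sub_top]
    · rw [if_neg h2]
      rcases eq_or_ne p.1 ⊤ with h1 | h1
      · rw [if_pos h1, h1, EReal.coe_ennreal_top, coe_ennreal_eq_coe_real h2,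
          EReal.top_sub_coe]
      · rw [if_neg h1, coe_ennreal_eq_coe_real h1, coe_ennreal_eq_coe_real h2,
          ← EReal.coe_sub]
  rw [heq]
  refine Measurable.ite (measurable_snd (measurableSet_singleton ⊤)) measurable_const ?_
  refine Measurable.ite (measurable_fst (measurableSet_singleton ⊤)) measurable_const ?_
  exact (measurable_fst.ennreal_toReal.sub measurable_snd.ennreal_toReal).coe_real_ereal

/-! ### Approximation of open sets by bounded continuous functions in a metric space -/

section MetricPart

variable {X : Type*} [PseudoMetricSpace X]

/-- approximation of the indicator of an open set from below -/
def gap (V : Set X) (m : ℕ) : X → ℝ := fun x => min 1 (m * infDist x Vᶜ)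

lemma gap_cont (V : Set X) (m : ℕ) : Continuous (gap V m) :=
  continuous_const.min (continuous_const.mul (continuous_infDist_pt _))

lemma gap_nonneg {V : Set X} {m : ℕ} {x : X} : 0 ≤ gap V m x :=
  le_min zero_le_one (mul_nonneg (Nat.cast_nonneg _) infDist_nonneg)

lemma gap_le_one {V : Set X} {m : ℕ} {x : X} : gap V m x ≤ 1 := min_le_left _ _

/-- the same, as a bounded continuous function -/
def gapB (V : Set X) (m : ℕ) : BoundedContinuousFunction X ℝ :=
  BoundedContinuousFunction.ofNormedAddCommGroup (gap V m) (gap_cont V m) 1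
    (fun x => by
      rw [Real.norm_eq_abs, abs_of_nonneg gap_nonneg]; exact gap_le_one)

@[simp] lemma gapB_apply (V : Set X) (m : ℕ) (x : X) : gapB V m x = gap V m x := rfl

lemma gap_zero_of_not_mem {V : Set X} {m : ℕ} {x : X} (hx : x ∉ V) : gap V m x = 0 := by
  have : infDist x Vᶜ = 0 := infDist_zero_of_mem hx
  simp [gap, this]

lemma iSup_ofReal_gap {V : Set X} (hV : IsOpen V) (hVc : Vᶜ.Nonempty) (x : X) :
    (⨆ m : ℕ, ENNReal.ofReal (gap V m x)) = V.indicator 1 x := by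
  by_cases hx : x ∈ V
  · rw [indicator_of_mem hx, Pi.one_apply]
    have hd : 0 < infDist x Vᶜ := by
      rw [← hV.isClosed_compl.notMem_iff_infDist_pos hVc]
      simpa using hx
    apply le_antisymm
    · refine iSup_le fun m => ?_
      calc ENNReal.ofReal (gap V m x) ≤ ENNReal.ofReal 1 :=
            ENNReal.ofReal_le_ofReal gap_le_one
        _ = 1 := ENNReal.ofReal_one
    · obtain ⟨m, hm⟩ := exists_nat_ge (infDist x Vᶜ)⁻¹
      refine le_iSup_of_le m ?_
      have h1 : (1 : ℝ) ≤ m * infDist x Vᶜ := by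
        rw [← inv_mul_cancel₀ hd.ne']
        exact mul_le_mul_of_nonneg_right hm hd.le
      have : gap V m x = 1 := min_eq_left h1
      rw [this, ENNReal.ofReal_one]
  · rw [indicator_of_notMem hx]
    simp [gap_zero_of_not_mem hx]

lemma gap_monotone (V : Set X) (x : X) : Monotone fun m : ℕ => gap V m x := by
  intro a b hab
  exact min_le_min le_rfl
    (mul_le_mul_of_nonneg_right (by exact_mod_cast hab) infDist_nonneg)

variable [MeasurableSpace X] [OpensMeasurableSpace X]

lemma measure_eq_iSup_lintegral_gap (μ : Measure X) {V : Set X} (hV : IsOpen V)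
    (hVc : Vᶜ.Nonempty) :
    μ V = ⨆ m : ℕ, ∫⁻ x, ENNReal.ofReal (gap V m x) ∂μ :=
  calc μ V = ∫⁻ x, V.indicator 1 x ∂μ := (lintegral_indicator_one hV.measurableSet).symm
    _ = ∫⁻ x, ⨆ m : ℕ, ENNReal.ofReal (gap V m x) ∂μ :=
        lintegral_congr fun x => (iSup_ofReal_gap hV hVc x).symm
    _ = ⨆ m : ℕ, ∫⁻ x, ENNReal.ofReal (gap V m x) ∂μ :=
        lintegral_iSup (fun m => ENNReal.measurable_ofReal.comp (gap_cont V m).measurable)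
          (fun a b hab => fun x => ENNReal.ofReal_le_ofReal (gap_monotone V x hab))

/-! ### A countable convergence-determining family -/

lemma key_liminf {b : Set (Set X)} (b_count : b.Countable)
    (b_basis : TopologicalSpace.IsTopologicalBasis b)
    (μ : Measure X) (μs : ℕ → Measure X) [IsProbabilityMeasure μ]
    [∀ i, IsProbabilityMeasure (μs i)]
    (h : ∀ t : Set (Set X), t.Finite → t ⊆ b → ∀ m : ℕ,
      Tendsto (fun n => ∫ x, gapB (⋃₀ t) m x ∂ μs n) atTop (𝓝 (∫ x, gapB (⋃₀ t) m x ∂μ)))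
    {G : Set X} (hG : IsOpen G) :
    μ G ≤ atTop.liminf fun i => μs i G := by
  set bG := {W | W ∈ b ∧ W ⊆ G} with hbG
  have hGU : G = ⋃₀ bG := b_basis.open_eq_sUnion' hG
  rcases Set.eq_empty_or_nonempty bG with hbe | hbne
  · rw [hGU, hbe]
    simp
  obtain ⟨e, he⟩ := (b_count.mono fun W hW => hW.1).exists_eq_range hbne
  have hmem : ∀ n, e n ∈ bG := fun n => by rw [he]; exact mem_range_self n
  have hGacc : G = ⋃ n, accumulate e n := by
    rw [hGU, he, sUnion_range, iUnion_accumulate]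
  have hmG : μ G = ⨆ n, μ (accumulate e n) := by
    rw [hGacc]
    exact monotone_accumulate.directed_le.measure_iUnion
  rw [hmG]
  refine iSup_le fun n => ?_
  set V := accumulate e n with hVdef
  have hVopen : IsOpen V := by
    rw [hVdef, accumulate_def]
    exact isOpen_iUnion fun j => isOpen_iUnion fun _ => b_basis.isOpen (hmem j).1
  have hVG : V ⊆ G := by
    rw [hVdef, accumulate_def]
    exact iUnion₂_subset fun j _ => (hmem j).2
  have hVU : ⋃₀ (e '' {j | j ≤ n}) = V := by
    rw [sUnion_image, hVdef, accumulate_def]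
    rfl
  by_cases hVc : Vᶜ = ∅
  · have hVuniv : V = univ := by rwa [compl_empty_iff] at hVc
    have hGuniv : G = univ := eq_univ_of_univ_subset (hVuniv ▸ hVG)
    have : μ V ≤ 1 := prob_le_one
    refine this.trans ?_
    have : (fun i => μs i G) = fun _ => (1 : ℝ≥0∞) := by
      funext i; rw [hGuniv, measure_univ]
    rw [this, liminf_const]
  · have hVcne : Vᶜ.Nonempty := nonempty_iff_ne_empty.2 hVc
    rw [measure_eq_iSup_lintegral_gap μ hVopen hVcne]
    refine iSup_le fun m => ?_
    have hk := h (e '' {j | j ≤ n}) ((Set.finite_Iic n).image e)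
      (by rintro W ⟨j, -, rfl⟩; exact (hmem j).1) m
    rw [hVU] at hk
    have hInt : ∀ (ν : Measure X), IsProbabilityMeasure ν →
        ENNReal.ofReal (∫ x, gapB V m x ∂ν) = ∫⁻ x, ENNReal.ofReal (gap V m x) ∂ν := by
      intro ν hν
      exact ofReal_integral_eq_lintegral_ofReal ((gapB V m).integrable ν)
        (Eventually.of_forall fun x => gap_nonneg)
    calc ∫⁻ x, ENNReal.ofReal (gap V m x) ∂μ
        = ENNReal.ofReal (∫ x, gapB V m x ∂μ) := (hInt μ ‹_›).symm
      _ = atTop.liminf fun i => ENNReal.ofReal (∫ x, gapB V m x ∂(μs i)) :=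
          ((ENNReal.continuous_ofReal.tendsto _).comp hk).liminf_eq.symm
      _ ≤ atTop.liminf fun i => μs i G := by
          refine liminf_le_liminf (Eventually.of_forall fun i => ?_) ?_ ?_
          · rw [hInt (μs i) inferInstance]
            calc ∫⁻ x, ENNReal.ofReal (gap V m x) ∂(μs i)
                ≤ ∫⁻ x, G.indicator 1 x ∂(μs i) := by
                  refine lintegral_mono fun x => ?_
                  by_cases hx : x ∈ G
                  · rw [indicator_of_mem hx, Pi.one_apply]
                    calc ENNReal.ofReal (gap V m x) ≤ ENNReal.ofReal 1 :=
                          ENNReal.ofReal_le_ofReal gap_le_one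
                      _ = 1 := ENNReal.ofReal_one
                  · rw [indicator_of_notMem hx,
                      gap_zero_of_not_mem (fun hxV => hx (hVG hxV))]
                    simp
              _ = μs i G := lintegral_indicator_one hG.measurableSet
          · isBoundedDefault
          · isBoundedDefault

end MetricPart

/-- A countable convergence-determining family of bounded continuous functions
on a Polish space. -/
lemma exists_determining (X : Type*) [TopologicalSpace X] [PolishSpace X]
    [MeasurableSpace X] [BorelSpace X] :
    ∃ g : ℕ → BoundedContinuousFunction X ℝ,
      ∀ (μ : Measure X) (μs : ℕ → Measure X), IsProbabilityMeasure μ →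
        (∀ i, IsProbabilityMeasure (μs i)) →
        (∀ k, Tendsto (fun n => ∫ x, g k x ∂ μs n) atTop (𝓝 (∫ x, g k x ∂μ))) →
        ∀ G : Set X, IsOpen G → μ G ≤ atTop.liminf fun i => μs i G := by
  letI := TopologicalSpace.upgradeIsCompletelyMetrizable X
  haveI : OpensMeasurableSpace X := by
    constructor
    rw [‹BorelSpace X›.measurable_eq]
  obtain ⟨b, b_count, -, b_basis⟩ := TopologicalSpace.exists_countable_basis X
  haveI : Countable {t : Set (Set X) // t.Finite ∧ t ⊆ b} :=
    (Set.countable_setOf_finite_subset b_count).to_subtype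
  haveI : Nonempty ({t : Set (Set X) // t.Finite ∧ t ⊆ b} × ℕ) :=
    ⟨⟨⟨∅, Set.finite_empty, empty_subset b⟩, 0⟩⟩
  obtain ⟨s, hs⟩ := exists_surjective_nat ({t : Set (Set X) // t.Finite ∧ t ⊆ b} × ℕ)
  refine ⟨fun k => gapB (⋃₀ ((s k).1 : Set (Set X))) (s k).2, ?_⟩
  intro μ μs hμ hμs hconv G hG
  haveI := hμ; haveI := hμs
  refine key_liminf b_count b_basis μ μs ?_ hG
  intro t ht htb m
  obtain ⟨k, hk⟩ := hs (⟨⟨t, ht, htb⟩, m⟩)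
  simpa only [hk] using hconv k

/-! ### The embedding `ι_J` as a measure-valued map -/

/-- The reference measure `e^{-s} ds` on `(0,∞)`. -/
def rho : Measure ℝ :=
  (volume.restrict (Set.Ioi 0)).withDensity fun s => ENNReal.ofReal (Real.exp (-s))

lemma rho_meas_density : Measurable fun s : ℝ => ENNReal.ofReal (Real.exp (-s)) :=
  ENNReal.measurable_ofReal.comp (Real.measurable_exp.comp measurable_neg)

lemma exp_neg_integrableOn : IntegrableOn (fun s : ℝ => Real.exp (-s)) (Set.Ioi 0) := by
  simpa using exp_neg_integrableOn_Ioi 0 one_pos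

instance rho_prob : IsProbabilityMeasure rho := by
  constructor
  rw [rho, withDensity_apply _ MeasurableSet.univ, Measure.restrict_univ,
    ← ofReal_integral_eq_lintegral_ofReal exp_neg_integrableOn
      (Eventually.of_forall fun s => (Real.exp_nonneg _))]
  rw [integral_exp_neg_Ioi, neg_zero, Real.exp_zero, ENNReal.ofReal_one]

section U

variable {U : Type*} [TopologicalSpace U] [PolishSpace U] [MeasurableSpace U] [BorelSpace U]

def mjmap (u : MJ U) : ℝ → ℝ × U := fun s => (s, u.1 s)

lemma meas_mjmap (u : MJ U) : Measurable (mjmap u) := measurable_id.prodMk u.2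

/-- The embedding `ι_J` into measures on `ℝ × U`. -/
def nu (u : MJ U) : Measure (ℝ × U) := rho.map (mjmap u)

instance nu_prob (u : MJ U) : IsProbabilityMeasure (nu u) :=
  Measure.isProbabilityMeasure_map (meas_mjmap u).aemeasurable

lemma lintegral_nu (u : MJ U) {f : ℝ × U → ℝ≥0∞} (hf : Measurable f) :
    ∫⁻ x, f x ∂(nu u) = ∫⁻ s in Set.Ioi 0, ENNReal.ofReal (Real.exp (-s)) * f (s, u.1 s) := by
  have hg : Measurable fun a : ℝ => f (mjmap u a) := hf.comp (meas_mjmap u)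
  rw [nu, lintegral_map hf (meas_mjmap u), rho,
    lintegral_withDensity_eq_lintegral_mul _ rho_meas_density hg]
  rfl

lemma integral_nu (u : MJ U) {φ : ℝ × U → ℝ} (hφ : Measurable φ) :
    ∫ x, φ x ∂(nu u) = ∫ s in Set.Ioi 0, Real.exp (-s) * φ (s, u.1 s) := by
  rw [nu, integral_map (meas_mjmap u).aemeasurable hφ.aestronglyMeasurable, rho]
  have hd : (fun s : ℝ => ENNReal.ofReal (Real.exp (-s)))
      = fun s : ℝ => ((Real.toNNReal (Real.exp (-s)) : ℝ≥0) : ℝ≥0∞) := rfl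
  have hm : Measurable fun s : ℝ => (Real.exp (-s)).toNNReal :=
    (Real.measurable_exp.comp measurable_neg).real_toNNReal
  rw [hd, integral_withDensity_eq_integral_smul hm (fun x => φ (mjmap u x))]
  refine integral_congr_ae (Eventually.of_forall fun s => ?_)
  show (Real.exp (-s)).toNNReal • φ (mjmap u s) = _
  rw [NNReal.smul_def, Real.coe_toNNReal _ (Real.exp_nonneg _)]
  rfl

/-- The functionals generating the topology `weakTopJ`. -/
def Ffun (φ : BoundedContinuousFunction (ℝ × U) ℝ) : MJ U → ℝ :=
  fun u => ∫ s in Set.Ioi (0 : ℝ), Real.exp (-s) * φ (s, u.1 s)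

lemma Ffun_eq_integral_nu (φ : BoundedContinuousFunction (ℝ × U) ℝ) (u : MJ U) :
    Ffun φ u = ∫ x, φ x ∂(nu u) := (integral_nu u φ.continuous.measurable).symm

lemma weakTopJ_eq_iInf :
    weakTopJ U = ⨅ φ : BoundedContinuousFunction (ℝ × U) ℝ,
      TopologicalSpace.induced (Ffun φ) inferInstance := rfl

lemma Ffun_eq_IfunE (φ : BoundedContinuousFunction (ℝ × U) ℝ) (u : MJ U) :
    Ffun φ u = (IfunE (fun p => Real.exp (-p.1) * φ p) u.1).toReal := by
  have hmeas : Measurable fun s : ℝ => Real.exp (-s) * φ (s, u.1 s) :=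
    (Real.measurable_exp.comp measurable_neg).mul
      (φ.continuous.measurable.comp (meas_mjmap u))
  have hInt : IntegrableOn (fun s : ℝ => Real.exp (-s) * φ (s, u.1 s)) (Set.Ioi 0) := by
    refine Integrable.mono' (exp_neg_integrableOn.const_mul ‖φ‖)
      hmeas.aestronglyMeasurable (Eventually.of_forall fun s => ?_)
    rw [Real.norm_eq_abs, abs_mul, abs_of_nonneg (Real.exp_nonneg _), mul_comm]
    refine mul_le_mul_of_nonneg_right ?_ (Real.exp_nonneg _)
    rw [← Real.norm_eq_abs]
    exact φ.norm_coe_le_norm _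
  have key := integral_eq_lintegral_pos_part_sub_lintegral_neg_part hInt
  set a := ∫⁻ s in Set.Ioi (0:ℝ), ENNReal.ofReal (Real.exp (-s) * φ (s, u.1 s)) with ha
  set bb := ∫⁻ s in Set.Ioi (0:ℝ), ENNReal.ofReal (-(Real.exp (-s) * φ (s, u.1 s))) with hbb
  have hfin : a ≠ ⊤ ∧ bb ≠ ⊤ := by
    have hb : ∫⁻ s in Set.Ioi (0:ℝ), (‖Real.exp (-s) * φ (s, u.1 s)‖₊ : ℝ≥0∞) < ⊤ := hInt.2
    constructor
    · refine ne_of_lt (lt_of_le_of_lt (lintegral_mono fun s => ?_) hb)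
      rw [← enorm_eq_nnnorm, Real.enorm_eq_ofReal_abs]
      exact ENNReal.ofReal_le_ofReal (le_abs_self _)
    · refine ne_of_lt (lt_of_le_of_lt (lintegral_mono fun s => ?_) hb)
      rw [← enorm_eq_nnnorm, Real.enorm_eq_ofReal_abs]
      exact ENNReal.ofReal_le_ofReal (neg_le_abs _)
  have hIf : IfunE (fun p : ℝ × U => Real.exp (-p.1) * φ p) u.1
      = (((a.toReal - bb.toReal : ℝ)) : EReal) := by
    show (a : EReal) - (bb : EReal) = _
    rw [coe_ennreal_eq_coe_real hfin.1, coe_ennreal_eq_coe_real hfin.2, ← EReal.coe_sub]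
  rw [hIf, EReal.toReal_coe]
  exact key

/-! ### Measurability of the functionals w.r.t. the Borel σ-algebra of `T♯(J)` -/

lemma comap_Ffun_le_borel (φ : BoundedContinuousFunction (ℝ × U) ℝ) :
    MeasurableSpace.comap (Ffun φ) (borel ℝ) ≤ @borel (MJ U) (weakTopJ U) := by
  rw [← borel_comap]
  exact borel_anti (iInf_le _ φ)

lemma meas_Ffun (φ : BoundedContinuousFunction (ℝ × U) ℝ) :
    Measurable[@borel (MJ U) (weakTopJ U)] (Ffun φ) := by
  rw [measurable_iff_comap_le, BorelSpace.measurable_eq (α := ℝ)]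
  exact comap_Ffun_le_borel φ

lemma meas_nu :
    @Measurable (MJ U) (Measure (ℝ × U)) (@borel (MJ U) (weakTopJ U)) _ nu := by
  have hgen : (inferInstance : MeasurableSpace (ℝ × U)) =
      MeasurableSpace.generateFrom {s : Set (ℝ × U) | IsOpen s} :=
    BorelSpace.measurable_eq (α := ℝ × U)
  letI := TopologicalSpace.upgradeIsCompletelyMetrizable (ℝ × U)
  haveI : OpensMeasurableSpace (ℝ × U) := by
    constructor
    rw [BorelSpace.measurable_eq (α := ℝ × U)]
  refine @Measure.measurable_of_measurable_coe _ _ _ (@borel (MJ U) (weakTopJ U)) nu ?_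
  intro s hs
  refine MeasurableSpace.induction_on_inter (C := fun t _ => Measurable[@borel (MJ U) (weakTopJ U)]
      fun u : MJ U => nu u t) hgen isPiSystem_isOpen ?_ ?_ ?_ ?_ s hs
  · simp only [measure_empty]; exact measurable_const
  · intro A hA
    by_cases hAc : Aᶜ = ∅
    · have hAu : A = univ := by rwa [compl_empty_iff] at hAc
      subst hAu
      simp only [measure_univ]
      exact measurable_const
    · have hAcne : Aᶜ.Nonempty := nonempty_iff_ne_empty.2 hAc
      have hA' : IsOpen A := hA
      have heq : (fun u : MJ U => nu u A)
          = fun u => ⨆ m : ℕ, ENNReal.ofReal (Ffun (gapB A m) u) := by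
        funext u
        rw [measure_eq_iSup_lintegral_gap (nu u) hA' hAcne]
        refine iSup_congr fun m => ?_
        rw [Ffun_eq_integral_nu,
          ofReal_integral_eq_lintegral_ofReal ((gapB A m).integrable _)
            (Eventually.of_forall fun x => gap_nonneg)]
        rfl
      rw [heq]
      exact Measurable.iSup fun m => ENNReal.measurable_ofReal.comp (meas_Ffun _)
  · intro t htm ht
    have heq : (fun u : MJ U => nu u tᶜ) = fun u => 1 - nu u t := by
      funext u
      rw [measure_compl htm (measure_ne_top _ t), measure_univ]
    rw [heq]
    exact Measurable.const_sub ht 1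
  · intro f hdisj hfm hf
    have heq : (fun u : MJ U => nu u (⋃ i, f i)) = fun u => ∑' i, nu u (f i) := by
      funext u
      exact measure_iUnion hdisj hfm
    rw [heq]
    exact Measurable.ennreal_tsum hf

lemma meas_lintegral_nu {f : ℝ × U → ℝ≥0∞} (hf : Measurable f) :
    Measurable[@borel (MJ U) (weakTopJ U)] fun u => ∫⁻ x, f x ∂(nu u) :=
  (Measure.measurable_lintegral hf).comp meas_nu

lemma meas_lintegral_comp {f : ℝ × U → ℝ≥0∞} (hf : Measurable f) :
    Measurable[@borel (MJ U) (weakTopJ U)] fun u : MJ U => ∫⁻ s in Set.Ioi 0, f (s, u.1 s) := by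
  have hf' : Measurable fun p : ℝ × U => ENNReal.ofReal (Real.exp p.1) * f p :=
    ((ENNReal.measurable_ofReal.comp (Real.measurable_exp.comp measurable_fst))).mul hf
  have heq : (fun u : MJ U => ∫⁻ s in Set.Ioi 0, f (s, u.1 s))
      = fun u => ∫⁻ x, ENNReal.ofReal (Real.exp x.1) * f x ∂(nu u) := by
    funext u
    rw [lintegral_nu u hf']
    refine lintegral_congr fun s => ?_
    rw [← mul_assoc, ← ENNReal.ofReal_mul (Real.exp_nonneg _), ← Real.exp_add,
      neg_add_cancel, Real.exp_zero, ENNReal.ofReal_one, one_mul]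
  rw [heq]
  exact meas_lintegral_nu hf'

/-- All the functionals `I_φ` are Borel w.r.t. the topology `T♯(J)`. -/
lemma direction1 :
    (⨆ (φ : ℝ × U → ℝ) (_ : Measurable φ),
        MeasurableSpace.comap (fun u : MJ U => IfunE φ u.1) inferInstance)
      ≤ @borel (MJ U) (weakTopJ U) := by
  refine iSup_le fun φ => iSup_le fun hφ => ?_
  refine measurable_iff_comap_le.mp ?_
  have h1 : Measurable[@borel (MJ U) (weakTopJ U)]
      fun u : MJ U => ∫⁻ s in Set.Ioi 0, ENNReal.ofReal (φ (s, u.1 s)) :=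
    meas_lintegral_comp (ENNReal.measurable_ofReal.comp hφ)
  have h2 : Measurable[@borel (MJ U) (weakTopJ U)]
      fun u : MJ U => ∫⁻ s in Set.Ioi 0, ENNReal.ofReal (-φ (s, u.1 s)) :=
    meas_lintegral_comp (ENNReal.measurable_ofReal.comp hφ.neg)
  exact measurable_esub.comp (h1.prodMk h2)

/-- The Borel σ-algebra of `T♯(J)` is contained in the σ-algebra generated by the `I_φ`. -/
lemma direction2 :
    @borel (MJ U) (weakTopJ U) ≤
      ⨆ (φ : ℝ × U → ℝ) (_ : Measurable φ),
        MeasurableSpace.comap (fun u : MJ U => IfunE φ u.1) inferInstance := by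
  obtain ⟨g, hg⟩ := exists_determining (ℝ × U)
  -- the topology is generated by countably many of the functionals
  have hτ : weakTopJ U = ⨅ k : ℕ, TopologicalSpace.induced (Ffun (g k)) inferInstance := by
    rw [weakTopJ_eq_iInf]
    refine le_antisymm (le_iInf fun k => iInf_le _ (g k)) (le_iInf fun φ => ?_)
    letI τc : TopologicalSpace (MJ U) :=
      ⨅ k : ℕ, TopologicalSpace.induced (Ffun (g k)) inferInstance
    have hτ2 : τc = TopologicalSpace.induced (fun (u : MJ U) (k : ℕ) => Ffun (g k) u)
        Pi.topologicalSpace := by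
      show τc = TopologicalSpace.induced _ (⨅ k : ℕ,
        TopologicalSpace.induced (fun f : ℕ → ℝ => f k) inferInstance)
      rw [induced_iInf]
      exact (iInf_congr fun k => (induced_compose
        (f := fun (u : MJ U) (j : ℕ) => Ffun (g j) u)
        (g := fun f : ℕ → ℝ => f k))).symm
    haveI : TopologicalSpace.PseudoMetrizableSpace (MJ U) :=
      Topology.IsInducing.pseudoMetrizableSpace
        (f := fun (u : MJ U) (k : ℕ) => Ffun (g k) u) ⟨hτ2⟩
    refine continuous_iff_le_induced.mp ?_
    refine SeqContinuous.continuous ?_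
    intro x u hx
    have hk : ∀ k : ℕ, Tendsto (fun n => Ffun (g k) (x n)) atTop (𝓝 (Ffun (g k) u)) :=
      fun k => ((continuous_iff_le_induced.mpr (iInf_le _ k)).tendsto u).comp hx
    have hconv : ∀ k : ℕ, Tendsto (fun n => ∫ y, g k y ∂ nu (x n)) atTop
        (𝓝 (∫ y, g k y ∂ nu u)) := by
      intro k
      simpa only [← Ffun_eq_integral_nu] using hk k
    have hOpen := hg (nu u) (fun i => nu (x i)) inferInstance (fun i => inferInstance) hconv
    have hT := BoundedContinuousFunction.tendsto_integral_of_forall_integral_le_liminf_integral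
      (μ := nu u) (μs := fun i => nu (x i))
      (fun f hf =>
        MeasureTheory.integral_le_liminf_integral_of_forall_isOpen_measure_le_liminf_measure hf
        hOpen) φ
    show Tendsto (Ffun φ ∘ x) atTop (𝓝 (Ffun φ u))
    simpa only [Function.comp_def, ← Ffun_eq_integral_nu] using hT
  have hτ2' : (⨅ k : ℕ, TopologicalSpace.induced (Ffun (g k))
        (inferInstance : TopologicalSpace ℝ))
      = TopologicalSpace.induced (fun (u : MJ U) (k : ℕ) => Ffun (g k) u)
        Pi.topologicalSpace := by
    show _ = TopologicalSpace.induced _ (⨅ k : ℕ,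
      TopologicalSpace.induced (fun f : ℕ → ℝ => f k) inferInstance)
    rw [induced_iInf]
    exact (iInf_congr fun k => (induced_compose
      (f := fun (u : MJ U) (j : ℕ) => Ffun (g j) u)
      (g := fun f : ℕ → ℝ => f k))).symm
  rw [hτ, hτ2', borel_comap, ← BorelSpace.measurable_eq (α := ℕ → ℝ)]
  have hpi : (MeasurableSpace.pi : MeasurableSpace (ℕ → ℝ))
      = ⨆ k : ℕ, (inferInstance : MeasurableSpace ℝ).comap fun f : ℕ → ℝ => f k := rfl
  rw [hpi, MeasurableSpace.comap_iSup]
  refine iSup_le fun k => ?_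
  rw [MeasurableSpace.comap_comp]
  have hcomp : ((fun f : ℕ → ℝ => f k) ∘ (fun (u : MJ U) (k : ℕ) => Ffun (g k) u))
      = EReal.toReal ∘ (fun u : MJ U => IfunE (fun p => Real.exp (-p.1) * (g k) p) u.1) :=
    funext fun u => Ffun_eq_IfunE (g k) u
  rw [hcomp, ← MeasurableSpace.comap_comp]
  have hψ : Measurable fun p : ℝ × U => Real.exp (-p.1) * (g k) p :=
    (Real.measurable_exp.comp measurable_fst.neg).mul (g k).continuous.measurable
  refine le_trans (MeasurableSpace.comap_mono ?_)
    (le_iSup₂ (f := fun (φ : ℝ × U → ℝ) (_ : Measurable φ) =>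
      MeasurableSpace.comap (fun u : MJ U => IfunE φ u.1)
        (inferInstance : MeasurableSpace EReal))
      (fun p : ℝ × U => Real.exp (-p.1) * (g k) p) hψ)
  exact measurable_iff_comap_le.mp measurable_ereal_toReal

end U
end Stmt15Aux

/-- The Borel sigma-field of `(J, T♯(J))` coincides with the sigma-field generated by the
functionals `I_φ`, `φ` ranging over all real-valued Borel functions on `(0,∞) × U`. -/
theorem stmt15 {U : Type*} [TopologicalSpace U] [PolishSpace U]
    [MeasurableSpace U] [BorelSpace U] :
    @borel (MJ U) (weakTopJ U) =
      ⨆ (φ : ℝ × U → ℝ) (_ : Measurable φ),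
        MeasurableSpace.comap (fun u : MJ U => IfunE φ u.1) inferInstance := by
  exact le_antisymm Stmt15Aux.direction2 Stmt15Aux.direction1

end
end
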